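/- arXiv:0805.4634 — 3 statements merged into one kernel-verified Lean document; each statement's English description precedes it below -/
import Mathlib

section
/- Let (L, F) be a filtered cochain complex of abelian groups with finite decreasing filtration by subcomplexes, and let Dec(F) be the shifted filtration, Dec(F)^p L^l = { x ∈ F^{p+l} L^l : dx ∈ F^{p+l+1}L^{l+1} }. Consider the bifiltered complex (L, F, Dec(F)) and for integers a, b the iterated graded piece Gr^a_F Gr^b_{Dec(F)} L (the quotient of F^a L ∩ Dec(F)^b L by F^{a+1}L ∩ Dec(F)^b L + F^a L ∩ Dec(F)^{b+1} L, with induced differential). Then H^r(Gr^a_F Gr^b_{Dec(F)} L) = 0 for all r ≠ a − b. -/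
set_option linter.unusedVariables false


/-! Basic theory of cochain complexes of abelian groups, indexed by `ℤ`,
with subcomplexes, quotient complexes, cohomology and induced maps. -/

/-- A cochain complex of abelian groups indexed by `ℤ`. -/
structure Cochain : Type 1 where
  X : ℤ → Type
  inst : ∀ l, AddCommGroup (X l)
  d : ∀ l, X l →+ X (l + 1)
  dd : ∀ l (x : X l), d (l + 1) (d l x) = 0

attribute [instance] Cochain.inst

namespace Cochain

variable (L M : Cochain)

/-- Transport along an equality of degrees. -/
def castAdd {a b : ℤ} (h : a = b) : L.X a ≃+ L.X b := by
  subst h; exact AddEquiv.refl _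

@[simp] theorem castAdd_rfl {a : ℤ} (x : L.X a) : L.castAdd rfl x = x := rfl

/-- Cocycles in degree `l`. -/
def cocycles (l : ℤ) : AddSubgroup (L.X l) := (L.d l).ker

/-- Coboundaries in degree `l`. -/
def bdry (l : ℤ) : AddSubgroup (L.X l) :=
  ((L.castAdd (show l - 1 + 1 = l by ring)).toAddMonoidHom.comp (L.d (l - 1))).range

/-- Cohomology in degree `l`: cocycles modulo coboundaries. -/
abbrev H (l : ℤ) : Type := ↥(L.cocycles l) ⧸ (L.bdry l).addSubgroupOf (L.cocycles l)

/-- The projection from cocycles onto cohomology. -/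
abbrev Hmk (l : ℤ) : ↥(L.cocycles l) →+ L.H l := QuotientAddGroup.mk' _

/-- A morphism of cochain complexes. -/
structure Hom (L M : Cochain) where
  f : ∀ l, L.X l →+ M.X l
  comm : ∀ l (x : L.X l), f (l + 1) (L.d l x) = M.d l (f l x)

variable {L M}

theorem Hom.cast_natural (φ : Hom L M) {a b : ℤ} (h : a = b) (x : L.X a) :
    φ.f b (L.castAdd h x) = M.castAdd h (φ.f a x) := by subst h; rfl

theorem mem_bdry_map (φ : Hom L M) (l : ℤ) {x : L.X l} (hx : x ∈ L.bdry l) :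
    φ.f l x ∈ M.bdry l := by
  obtain ⟨y, hy⟩ := hx
  refine ⟨φ.f (l - 1) y, ?_⟩
  simp only [AddMonoidHom.comp_apply, AddEquiv.coe_toAddMonoidHom] at hy ⊢
  rw [← hy, φ.cast_natural, φ.comm]

/-- The map induced on cocycles by a morphism of complexes. -/
def Hom.cocyclesMap (φ : Hom L M) (l : ℤ) : ↥(L.cocycles l) →+ ↥(M.cocycles l) :=
  AddMonoidHom.codRestrict ((φ.f l).domRestrict (L.cocycles l)) (M.cocycles l) (fun x => by
    have hx : L.d l x.1 = 0 := x.2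
    show M.d l (φ.f l x.1) = 0
    rw [← φ.comm l x.1, hx, map_zero])

/-- The map induced on cohomology by a morphism of complexes. -/
def Hom.Hmap (φ : Hom L M) (l : ℤ) : L.H l →+ M.H l :=
  QuotientAddGroup.lift _ ((M.Hmk l).comp (φ.cocyclesMap l)) (fun x hx => by
    have hx' : (x : L.X l) ∈ L.bdry l := AddSubgroup.mem_addSubgroupOf.mp hx
    have : (φ.cocyclesMap l x : M.X l) ∈ M.bdry l := mem_bdry_map φ l hx'
    simpa using (QuotientAddGroup.eq_zero_iff _).2 (AddSubgroup.mem_addSubgroupOf.mpr this))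

variable (L)

/-- A family of subgroups is a subcomplex if it is stable under the differential. -/
def IsSubcomplex (S : ∀ l, AddSubgroup (L.X l)) : Prop :=
  ∀ l, ∀ x ∈ S l, L.d l x ∈ S (l + 1)

/-- The subcomplex determined by a `d`-stable family of subgroups. -/
def sub (S : ∀ l, AddSubgroup (L.X l)) (hS : L.IsSubcomplex S) : Cochain where
  X l := S l
  inst l := inferInstance
  d l := AddMonoidHom.codRestrict ((L.d l).domRestrict (S l)) (S (l + 1))
    (fun x => hS l x.1 x.2)
  dd l x := Subtype.ext (L.dd l x.1)

/-- The inclusion of a subcomplex. -/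
def subIncl (S : ∀ l, AddSubgroup (L.X l)) (hS : L.IsSubcomplex S) :
    Hom (L.sub S hS) L where
  f l := (S l).subtype
  comm _ _ := rfl

/-- The quotient complex by a subcomplex. -/
def quot (S : ∀ l, AddSubgroup (L.X l)) (hS : L.IsSubcomplex S) : Cochain where
  X l := L.X l ⧸ S l
  inst l := inferInstance
  d l := QuotientAddGroup.lift (S l) ((QuotientAddGroup.mk' (S (l + 1))).comp (L.d l))
    (fun x hx => by simpa using (QuotientAddGroup.eq_zero_iff _).2 (hS l x hx))
  dd l x := QuotientAddGroup.induction_on x (fun y => by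
    simp only [QuotientAddGroup.lift_mk, AddMonoidHom.comp_apply,
      QuotientAddGroup.mk'_apply, QuotientAddGroup.lift_mk, L.dd]
    rfl)

/-- The projection onto a quotient complex. -/
def quotHom (S : ∀ l, AddSubgroup (L.X l)) (hS : L.IsSubcomplex S) :
    Hom L (L.quot S hS) where
  f l := QuotientAddGroup.mk' (S l)
  comm l x := by
    simp only [quot, QuotientAddGroup.mk'_apply, QuotientAddGroup.lift_mk,
      AddMonoidHom.comp_apply]
    rfl

/-- The filtration induced on cohomology by a subcomplex: the image of
`H^l(S) → H^l(L)`. -/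
def imageInH (S : ∀ l, AddSubgroup (L.X l)) (hS : L.IsSubcomplex S) (l : ℤ) :
    AddSubgroup (L.H l) :=
  ((L.subIncl S hS).Hmap l).range

variable {L}

/-- Restriction of a morphism of complexes to subcomplexes. -/
def Hom.restrictHom (φ : Hom L M) (S : ∀ l, AddSubgroup (L.X l))
    (T : ∀ l, AddSubgroup (M.X l)) (hS : L.IsSubcomplex S) (hT : M.IsSubcomplex T)
    (h : ∀ l, ∀ x ∈ S l, φ.f l x ∈ T l) :
    Hom (L.sub S hS) (M.sub T hT) where
  f l := AddMonoidHom.codRestrict ((φ.f l).domRestrict (S l)) (T l) (fun x => h l x.1 x.2)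
  comm l x := Subtype.ext (φ.comm l x.1)

/-- Descent of a morphism of complexes to quotient complexes. -/
def Hom.descendHom (φ : Hom L M) (S : ∀ l, AddSubgroup (L.X l))
    (T : ∀ l, AddSubgroup (M.X l)) (hS : L.IsSubcomplex S) (hT : M.IsSubcomplex T)
    (h : ∀ l, ∀ x ∈ S l, φ.f l x ∈ T l) :
    Hom (L.quot S hS) (M.quot T hT) where
  f l := QuotientAddGroup.map (S l) (T l) (φ.f l) (fun x hx => h l x hx)
  comm l x := QuotientAddGroup.induction_on x (fun y => by
    simp only [quot, QuotientAddGroup.lift_mk, QuotientAddGroup.map_mk,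
      QuotientAddGroup.mk'_apply, AddMonoidHom.comp_apply, φ.comm]
    exact congrArg (QuotientAddGroup.mk' (T (l + 1))) (φ.comm l y))

end Cochain
namespace Cochain

variable (L M : Cochain)

theorem IsSubcomplex.inf {L : Cochain} {S T : ∀ l, AddSubgroup (L.X l)}
    (hS : L.IsSubcomplex S) (hT : L.IsSubcomplex T) :
    L.IsSubcomplex (fun l => S l ⊓ T l) := fun l x hx =>
  AddSubgroup.mem_inf.2 ⟨hS l x (AddSubgroup.mem_inf.1 hx).1, hT l x (AddSubgroup.mem_inf.1 hx).2⟩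

theorem IsSubcomplex.sup {L : Cochain} {S T : ∀ l, AddSubgroup (L.X l)}
    (hS : L.IsSubcomplex S) (hT : L.IsSubcomplex T) :
    L.IsSubcomplex (fun l => S l ⊔ T l) := by
  intro l x hx
  rw [AddSubgroup.mem_sup] at hx ⊢
  obtain ⟨y, hy, z, hz, rfl⟩ := hx
  exact ⟨L.d l y, hS l y hy, L.d l z, hT l z hz, (map_add _ _ _).symm⟩

theorem ker_isSubcomplex {L M : Cochain} (φ : Hom L M) :
    L.IsSubcomplex (fun l => (φ.f l).ker) := by
  intro l x hx
  rw [AddMonoidHom.mem_ker] at hx ⊢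
  rw [φ.comm l x, hx, map_zero]

/-- The graded piece `S/T` of two nested subcomplexes, as a cochain complex. -/
def GrCochain (L : Cochain) (S T : ∀ l, AddSubgroup (L.X l)) (hS : L.IsSubcomplex S)
    (hT : L.IsSubcomplex T) (_hle : ∀ l, T l ≤ S l) : Cochain :=
  (L.sub S hS).quot (fun l => (T l).addSubgroupOf (S l)) (fun l x hx =>
    AddSubgroup.mem_addSubgroupOf.2 (hT l x.1 (AddSubgroup.mem_addSubgroupOf.1 hx)))

/-- The morphism induced on graded pieces by a filtered morphism of complexes. -/
def Hom.grHom {L M : Cochain} (φ : Hom L M) (S T : ∀ l, AddSubgroup (L.X l))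
    (S' T' : ∀ l, AddSubgroup (M.X l)) (hS : L.IsSubcomplex S) (hT : L.IsSubcomplex T)
    (hS' : M.IsSubcomplex S') (hT' : M.IsSubcomplex T')
    (hle : ∀ l, T l ≤ S l) (hle' : ∀ l, T' l ≤ S' l)
    (h1 : ∀ l, ∀ x ∈ S l, φ.f l x ∈ S' l) (h2 : ∀ l, ∀ x ∈ T l, φ.f l x ∈ T' l) :
    Hom (GrCochain L S T hS hT hle) (GrCochain M S' T' hS' hT' hle') :=
  (φ.restrictHom S S' hS hS' h1).descendHom _ _ _ _
    (fun l x hx => AddSubgroup.mem_addSubgroupOf.2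
      (h2 l x.1 (AddSubgroup.mem_addSubgroupOf.1 hx)))

/-- The shifted (décalée) filtration `Dec(F)`:
`Dec(F)^p L^l = { x ∈ F^{p+l} L^l : d x ∈ F^{p+l+1} L^{l+1} }`. -/
def decF (L : Cochain) (F : ℤ → ∀ l, AddSubgroup (L.X l)) (p l : ℤ) :
    AddSubgroup (L.X l) :=
  F (p + l) l ⊓ (F (p + l + 1) (l + 1)).comap (L.d l)

theorem decF_isSubcomplex (L : Cochain) (F : ℤ → ∀ l, AddSubgroup (L.X l)) (p : ℤ) :
    L.IsSubcomplex (fun l => decF L F p l) := by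
  intro l x hx
  simp only [decF, AddSubgroup.mem_inf, AddSubgroup.mem_comap] at hx ⊢
  refine ⟨?_, ?_⟩
  · have h : p + (l + 1) = p + l + 1 := by ring
    rw [h]
    exact hx.2
  · rw [L.dd]
    exact zero_mem _

theorem decF_mono (L : Cochain) (F : ℤ → ∀ l, AddSubgroup (L.X l))
    (hdec : ∀ p l, F (p + 1) l ≤ F p l) (p l : ℤ) :
    decF L F (p + 1) l ≤ decF L F p l := by
  intro x hx
  simp only [decF, AddSubgroup.mem_inf, AddSubgroup.mem_comap] at hx ⊢
  have e1 : p + 1 + l = p + l + 1 := by ring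
  rw [e1] at hx
  exact ⟨hdec (p + l) l hx.1, hdec (p + l + 1) (l + 1) hx.2⟩

/-- The iterated graded piece `Gr^a_F Gr^b_G L`, as a cochain complex:
`(F^a ∩ G^b) / (F^{a+1} ∩ G^b + F^a ∩ G^{b+1})`. -/
def GrGrCochain (L : Cochain) (F G : ℤ → ∀ l, AddSubgroup (L.X l))
    (hFsub : ∀ p, L.IsSubcomplex (F p)) (hGsub : ∀ p, L.IsSubcomplex (G p))
    (hFdec : ∀ p l, F (p + 1) l ≤ F p l) (hGdec : ∀ p l, G (p + 1) l ≤ G p l)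
    (a b : ℤ) : Cochain :=
  GrCochain L (fun l => F a l ⊓ G b l)
    (fun l => (F (a + 1) l ⊓ G b l) ⊔ (F a l ⊓ G (b + 1) l))
    (IsSubcomplex.inf (hFsub a) (hGsub b))
    (IsSubcomplex.sup (IsSubcomplex.inf (hFsub (a + 1)) (hGsub b))
      (IsSubcomplex.inf (hFsub a) (hGsub (b + 1))))
    (fun l => sup_le (inf_le_inf_right _ (hFdec a l)) (inf_le_inf_left _ (hGdec b l)))

end Cochain


namespace Cochain

theorem quot_subsingleton {G : Type} [AddGroup G] (s : AddSubgroup G)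
    (h : ∀ x : G, x ∈ s) : Subsingleton (G ⧸ s) :=
  ⟨fun x y => QuotientAddGroup.induction_on x fun a => QuotientAddGroup.induction_on y fun b =>
    (QuotientAddGroup.eq).2 (h _)⟩

theorem quot_subsingleton' {G : Type} [AddGroup G] [Subsingleton G] (s : AddSubgroup G) :
    Subsingleton (G ⧸ s) :=
  quot_subsingleton s (fun x => by rw [Subsingleton.elim x 0]; exact zero_mem _)

theorem H_subsingleton (L : Cochain) (l : ℤ) (h : Subsingleton ↥(L.cocycles l)) :
    Subsingleton (L.H l) := @quot_subsingleton' _ _ h _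

theorem cocycles_subsingleton_of_X (L : Cochain) (l : ℤ) (h : Subsingleton (L.X l)) :
    Subsingleton ↥(L.cocycles l) :=
  ⟨fun x y => Subtype.ext (@Subsingleton.elim _ h _ _)⟩

theorem grCochain_X_subsingleton (L : Cochain) (S T : ∀ l, AddSubgroup (L.X l))
    (hS : L.IsSubcomplex S) (hT : L.IsSubcomplex T) (hle : ∀ l, T l ≤ S l)
    (l : ℤ) (h : S l ≤ T l) :
    Subsingleton ((GrCochain L S T hS hT hle).X l) :=
  quot_subsingleton _ (fun x => AddSubgroup.mem_addSubgroupOf.2 (h x.2))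

end Cochain

open Cochain in
/-- For a filtered cochain complex `(L, F)` of abelian groups with shifted
filtration `Dec(F)`, the bifiltered complex `(L, F, Dec(F))` satisfies the vanishing
`H^r(Gr^a_F Gr^b_{Dec(F)} L) = 0` for all `r ≠ a - b`. -/
theorem vanishing_gr_F_gr_decF (L : Cochain)
    (F : ℤ → ∀ l, AddSubgroup (L.X l))
    (hdec : ∀ p l, F (p + 1) l ≤ F p l)
    (hsub : ∀ p, L.IsSubcomplex (F p))
    (hfin : ∃ a b : ℤ, (∀ l, F a l = ⊤) ∧ (∀ l, F b l = ⊥))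
    (a b r : ℤ) (hr : r ≠ a - b) :
    Subsingleton ((GrGrCochain L F (fun q l => decF L F q l)
      hsub (fun q => decF_isSubcomplex L F q) hdec
      (fun q l => decF_mono L F hdec q l) a b).H r) := by
  have Fmono : ∀ (l p q : ℤ), p ≤ q → F q l ≤ F p l := fun l p q hpq =>
    Int.le_induction (motive := fun n _ => F n l ≤ F p l) (le_refl _) (fun n _ ih => le_trans (hdec n l) ih) q hpq
  set G : ℤ → ∀ l, AddSubgroup (L.X l) := fun q l => decF L F q l with hG
  set S : ∀ l, AddSubgroup (L.X l) := fun l => F a l ⊓ G b l with hSdef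
  set T : ∀ l, AddSubgroup (L.X l) :=
    fun l => (F (a + 1) l ⊓ G b l) ⊔ (F a l ⊓ G (b + 1) l) with hTdef
  apply H_subsingleton
  rcases eq_or_ne r (a - b - 1) with hedge | hedge
  · -- edge degree: the differential is injective, so cocycles vanish
    subst hedge
    constructor
    rintro ⟨xv, hx⟩ ⟨yv, hy⟩
    suffices hz : ∀ (zv) (hz : zv ∈ ((GrGrCochain L F G hsub (fun q => decF_isSubcomplex L F q)
        hdec (fun q l => decF_mono L F hdec q l) a b).cocycles (a - b - 1))),
        (⟨zv, hz⟩ : ↥((GrGrCochain L F G hsub (fun q => decF_isSubcomplex L F q)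
        hdec (fun q l => decF_mono L F hdec q l) a b).cocycles (a - b - 1))) = 0 by
      rw [hz xv hx, hz yv hy]
    intro zv hz
    change ↥(S (a - b - 1)) ⧸ (T (a - b - 1)).addSubgroupOf (S (a - b - 1)) at zv
    induction zv using QuotientAddGroup.induction_on with
    | H z =>
      refine Subtype.ext ?_
      show QuotientAddGroup.mk z = 0
      rw [QuotientAddGroup.eq_zero_iff]
      rw [AddSubgroup.mem_addSubgroupOf]
      -- from hz, extract d z.1 ∈ T (a-b-1+1)
      have hd : L.d (a - b - 1) z.1 ∈ T (a - b - 1 + 1) := by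
        have hz' : ((GrGrCochain L F G hsub (fun q => decF_isSubcomplex L F q)
            hdec (fun q l => decF_mono L F hdec q l) a b).d (a - b - 1))
            (QuotientAddGroup.mk z) = 0 := hz
        rw [show ((GrGrCochain L F G hsub (fun q => decF_isSubcomplex L F q)
            hdec (fun q l => decF_mono L F hdec q l) a b).d (a - b - 1))
            (QuotientAddGroup.mk z)
          = QuotientAddGroup.mk ((L.sub S (IsSubcomplex.inf (hsub a)
              (decF_isSubcomplex L F b))).d (a - b - 1) z) from rfl] at hz'
        replace hz' := AddSubgroup.mem_addSubgroupOf.1 ((QuotientAddGroup.eq_zero_iff _).1 hz')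
        exact hz'
      have hdF : L.d (a - b - 1) z.1 ∈ F (a + 1) (a - b - 1 + 1) := by
        rw [AddSubgroup.mem_sup] at hd
        obtain ⟨u, hu, v, hv, huv⟩ := hd
        have hu1 : u ∈ F (a + 1) (a - b - 1 + 1) := hu.1
        have hv1 : v ∈ F (a + 1) (a - b - 1 + 1) := by
          have := hv.2.1
          rwa [show b + 1 + (a - b - 1 + 1) = a + 1 by ring] at this
        rw [← huv]; exact add_mem hu1 hv1
      -- show z.1 ∈ T (a-b-1) via the right summand
      refine AddSubgroup.mem_sup_right ?_
      refine AddSubgroup.mem_inf.2 ⟨z.2.1, ?_⟩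
      show z.1 ∈ decF L F (b + 1) (a - b - 1)
      refine AddSubgroup.mem_inf.2 ⟨?_, ?_⟩
      · rw [show b + 1 + (a - b - 1) = a by ring]; exact z.2.1
      · rw [AddSubgroup.mem_comap, show b + 1 + (a - b - 1) + 1 = a + 1 by ring]
        exact hdF
  · -- all other degrees: the complex itself vanishes
    apply cocycles_subsingleton_of_X
    apply grCochain_X_subsingleton
    rcases lt_or_gt_of_ne hr with hlt | hgt
    · -- r < a - b, r ≠ a - b - 1, so r ≤ a - b - 2 : S r ≤ right summand
      have hr2 : b + r + 2 ≤ a := by omega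
      intro x hx
      refine AddSubgroup.mem_sup_right (AddSubgroup.mem_inf.2 ⟨hx.1, ?_⟩)
      show x ∈ decF L F (b + 1) r
      refine AddSubgroup.mem_inf.2 ⟨?_, ?_⟩
      · exact Fmono r (b + 1 + r) a (by omega) hx.1
      · rw [AddSubgroup.mem_comap]
        exact Fmono (r + 1) (b + 1 + r + 1) a (by omega) (hsub a r x hx.1)
    · -- r > a - b : S r ≤ left summand
      have hr1 : a + 1 ≤ b + r := by omega
      intro x hx
      refine AddSubgroup.mem_sup_left (AddSubgroup.mem_inf.2 ⟨?_, hx.2⟩)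
      have := hx.2.1
      exact Fmono r (a + 1) (b + r) hr1 this
end

section
/- Let L be a bounded-below cochain complex of abelian groups equipped with two finite decreasing filtrations P and F by subcomplexes, satisfying the vanishing condition: H^r(Gr^a_F Gr^b_P L) = 0 for all r ≠ a − b. Then for all integers p and l, the induced filtrations on cohomology agree after shift: P^p H^l(L) = F^{p+l} H^l(L), where for a subcomplex A ⊆ L, the induced subgroup of H^l(L) is Im(H^l(A) → H^l(L)). -/
set_option linter.unusedVariables false


namespace Cochain

variable {L : Cochain}

theorem castAdd_d' {a b : ℤ} (h : a = b) (h' : a + 1 = b + 1) (x : L.X a) :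
    L.d b (L.castAdd h x) = L.castAdd h' (L.d a x) := by subst h; rfl

theorem castAdd_mem (S : ∀ l, AddSubgroup (L.X l)) {a b : ℤ} (h : a = b) {x : L.X a}
    (hx : x ∈ S a) : L.castAdd h x ∈ S b := by subst h; exact hx

theorem d_castAdd_d (l : ℤ) (y : L.X (l - 1)) :
    L.d l (L.castAdd (show l - 1 + 1 = l by ring) (L.d (l - 1) y)) = 0 := by
  rw [castAdd_d' (show l - 1 + 1 = l by ring) (by ring), L.dd]
  exact map_zero _

theorem filt_mono {S : ℤ → ∀ l, AddSubgroup (L.X l)}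
    (hdec : ∀ p l, S (p + 1) l ≤ S p l) {a b : ℤ} (hab : a ≤ b) (l : ℤ) :
    S b l ≤ S a l := by
  exact Int.le_induction (motive := fun b _ => S b l ≤ S a l) le_rfl
    (fun n _ ih => le_trans (hdec n l) ih) b hab

theorem grCochain_castAdd_mk (L : Cochain) (S T : ∀ l, AddSubgroup (L.X l))
    (hS : L.IsSubcomplex S) (hT : L.IsSubcomplex T) (hle : ∀ l, T l ≤ S l)
    {a b : ℤ} (h : a = b) (t : (L.sub S hS).X a) :
    (GrCochain L S T hS hT hle).castAdd h (QuotientAddGroup.mk t) =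
      QuotientAddGroup.mk ((L.sub S hS).castAdd h t) := by subst h; rfl

theorem sub_castAdd_val (L : Cochain) (S : ∀ l, AddSubgroup (L.X l))
    (hS : L.IsSubcomplex S) {a b : ℤ} (h : a = b) (t : (L.sub S hS).X a) :
    ((L.sub S hS).castAdd h t).1 = L.castAdd h t.1 := by subst h; rfl

/-- Element-level consequence of the vanishing of the cohomology of a graded quotient:
every relative cocycle is a relative coboundary. -/
theorem gr_vanish_elim (L : Cochain) (S T : ∀ l, AddSubgroup (L.X l))
    (hS : L.IsSubcomplex S) (hT : L.IsSubcomplex T) (hle : ∀ l, T l ≤ S l) (r : ℤ)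
    (hvan : Subsingleton ((GrCochain L S T hS hT hle).H r))
    (x : L.X r) (hx : x ∈ S r) (hdx : L.d r x ∈ T (r + 1)) :
    ∃ y ∈ S (r - 1), x - L.castAdd (show r - 1 + 1 = r by ring) (L.d (r - 1) y) ∈ T r := by
  set M := GrCochain L S T hS hT hle with hM
  have hξc : M.d r (QuotientAddGroup.mk ⟨x, hx⟩) = 0 := by
    show (QuotientAddGroup.mk ((L.sub S hS).d r ⟨x, hx⟩) :
        ↥(S (r + 1)) ⧸ (T (r + 1)).addSubgroupOf (S (r + 1))) = 0
    exact (QuotientAddGroup.eq_zero_iff _).2 (AddSubgroup.mem_addSubgroupOf.2 hdx)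
  have hmem : (QuotientAddGroup.mk ⟨x, hx⟩ : M.X r) ∈ M.cocycles r := hξc
  have h0 : M.Hmk r ⟨QuotientAddGroup.mk ⟨x, hx⟩, hmem⟩ = 0 := Subsingleton.elim _ _
  have hbd : (QuotientAddGroup.mk ⟨x, hx⟩ : M.X r) ∈ M.bdry r :=
    AddSubgroup.mem_addSubgroupOf.1 ((QuotientAddGroup.eq_zero_iff _).1 h0)
  obtain ⟨w, hw⟩ := hbd
  obtain ⟨s, rfl⟩ := QuotientAddGroup.mk'_surjective ((T (r - 1)).addSubgroupOf (S (r - 1))) w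
  have e : M.d (r - 1) (QuotientAddGroup.mk s) =
      QuotientAddGroup.mk ((L.sub S hS).d (r - 1) s) := rfl
  simp only [AddMonoidHom.comp_apply, AddEquiv.coe_toAddMonoidHom,
    QuotientAddGroup.mk'_apply] at hw
  replace hw : M.castAdd (show r - 1 + 1 = r by ring) (M.d (r - 1) (QuotientAddGroup.mk s)) =
      (QuotientAddGroup.mk ⟨x, hx⟩ : M.X r) := hw
  rw [e] at hw
  replace hw := (grCochain_castAdd_mk L S T hS hT hle (show r - 1 + 1 = r by ring)
    ((L.sub S hS).d (r - 1) s)).symm.trans hw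
  have hsub := (QuotientAddGroup.eq_iff_sub_mem (N := (T r).addSubgroupOf (S r))).1 hw
  have hval : ((L.sub S hS).castAdd (show r - 1 + 1 = r by ring) ((L.sub S hS).d (r - 1) s)).1
      - x ∈ T r := AddSubgroup.mem_addSubgroupOf.1 hsub
  rw [sub_castAdd_val] at hval
  refine ⟨s.1, s.2, ?_⟩
  have := neg_mem hval
  rwa [neg_sub] at this

theorem mem_imageInH (L : Cochain) (S : ∀ l, AddSubgroup (L.X l)) (hS : L.IsSubcomplex S)
    (l : ℤ) (z : L.X l) (hz : z ∈ L.cocycles l) (hzS : z ∈ S l) :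
    L.Hmk l ⟨z, hz⟩ ∈ imageInH L S hS l := by
  have hc : (⟨z, hzS⟩ : (L.sub S hS).X l) ∈ (L.sub S hS).cocycles l := Subtype.ext hz
  exact ⟨(L.sub S hS).Hmk l ⟨⟨z, hzS⟩, hc⟩, rfl⟩

theorem imageInH_elim (L : Cochain) (S : ∀ l, AddSubgroup (L.X l)) (hS : L.IsSubcomplex S)
    (l : ℤ) (h : L.H l) (hmem : h ∈ imageInH L S hS l) :
    ∃ z, ∃ hz : z ∈ L.cocycles l, z ∈ S l ∧ L.Hmk l ⟨z, hz⟩ = h := by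
  obtain ⟨ξ, rfl⟩ := hmem
  obtain ⟨c, rfl⟩ := QuotientAddGroup.mk'_surjective _ ξ
  have hz : c.1.1 ∈ L.cocycles l := congrArg Subtype.val c.2
  exact ⟨c.1.1, hz, c.1.2, rfl⟩

theorem Hmk_eq_of_bdry (L : Cochain) (l : ℤ) (z z' : L.X l)
    (hz : z ∈ L.cocycles l) (hz' : z' ∈ L.cocycles l) (w : L.X (l - 1))
    (hw : z - z' = L.castAdd (show l - 1 + 1 = l by ring) (L.d (l - 1) w)) :
    L.Hmk l ⟨z, hz⟩ = L.Hmk l ⟨z', hz'⟩ := by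
  rw [← sub_eq_zero, ← map_sub]
  refine (QuotientAddGroup.eq_zero_iff _).2 (AddSubgroup.mem_addSubgroupOf.2 ?_)
  exact ⟨w, by simpa using hw.symm⟩

variable (L : Cochain) (P F : ℤ → ∀ l, AddSubgroup (L.X l)) in
/-- Pushing a relative cocycle deeper into the `P`-filtration (when `l < a - b`). -/
theorem claimC
    (hPsub : ∀ p, L.IsSubcomplex (P p)) (hFsub : ∀ p, L.IsSubcomplex (F p))
    (hFdec : ∀ p l, F (p + 1) l ≤ F p l)
    (hV : ∀ a b r : ℤ, r ≠ a - b → ∀ x : L.X r, x ∈ F a r → x ∈ P b r →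
      L.d r x ∈ (F (a + 1) (r + 1) ⊓ P b (r + 1)) ⊔ (F a (r + 1) ⊓ P (b + 1) (r + 1)) →
      ∃ y, (y ∈ F a (r - 1) ∧ y ∈ P b (r - 1)) ∧
        x - L.castAdd (show r - 1 + 1 = r by ring) (L.d (r - 1) y) ∈
          (F (a + 1) r ⊓ P b r) ⊔ (F a r ⊓ P (b + 1) r))
    (a1 : ℤ) (hFbot : ∀ l, F a1 l = ⊥) :
    ∀ (k : ℕ) (a b l : ℤ), a1 ≤ a + k → l < a - b →
      ∀ z : L.X l, z ∈ F a l → z ∈ P b l →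
      L.d l z ∈ F a (l + 1) → L.d l z ∈ P (b + 1) (l + 1) →
      ∃ y, (y ∈ F a (l - 1) ∧ y ∈ P b (l - 1)) ∧
        z - L.castAdd (show l - 1 + 1 = l by ring) (L.d (l - 1) y) ∈ F a l ⊓ P (b + 1) l := by
  have base : ∀ (a b l : ℤ), a1 ≤ a → ∀ z : L.X l, z ∈ F a l →
      ∃ y, (y ∈ F a (l - 1) ∧ y ∈ P b (l - 1)) ∧
        z - L.castAdd (show l - 1 + 1 = l by ring) (L.d (l - 1) y) ∈ F a l ⊓ P (b + 1) l := by
    intro a b l ha z hzF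
    have hz0 : z = 0 := by
      have : z ∈ F a1 l := filt_mono hFdec ha l hzF
      simpa [hFbot l] using this
    refine ⟨0, ⟨zero_mem _, zero_mem _⟩, ?_⟩
    simp only [hz0, map_zero, sub_zero]
    exact ⟨zero_mem _, zero_mem _⟩
  intro k
  induction k with
  | zero =>
    intro a b l hk hl z hzF hzP hdF hdP
    exact base a b l (by simpa using hk) z hzF
  | succ n ih =>
    intro a b l hk hl z hzF hzP hdF hdP
    by_cases ha : a1 ≤ a
    · exact base a b l ha z hzF
    · push_neg at ha
      obtain ⟨y1, ⟨hy1F, hy1P⟩, hz1⟩ := hV a b l (by omega) z hzF hzP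
        (AddSubgroup.mem_sup_right ⟨hdF, hdP⟩)
      set c1 := L.castAdd (show l - 1 + 1 = l by ring) (L.d (l - 1) y1) with hc1
      obtain ⟨u, hu, v, hv, huv⟩ := AddSubgroup.mem_sup.1 hz1
      have hdc1 : L.d l c1 = 0 := d_castAdd_d l y1
      have hdu : L.d l u = L.d l z - L.d l v := by
        have : u = z - c1 - v := by rw [← huv]; abel
        rw [this, map_sub, map_sub, hdc1]; abel
      have hduF : L.d l u ∈ F (a + 1) (l + 1) := hFsub (a + 1) l u hu.1
      have hduP : L.d l u ∈ P (b + 1) (l + 1) := by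
        rw [hdu]; exact sub_mem hdP (hPsub (b + 1) l v hv.2)
      obtain ⟨y2, ⟨hy2F, hy2P⟩, hu2⟩ := ih (a + 1) b l (by push_cast at hk ⊢; omega)
        (by omega) u hu.1 hu.2 hduF hduP
      set c2 := L.castAdd (show l - 1 + 1 = l by ring) (L.d (l - 1) y2) with hc2
      refine ⟨y1 + y2, ⟨add_mem hy1F (hFdec a (l - 1) hy2F), add_mem hy1P hy2P⟩, ?_⟩
      have hsplit : z - L.castAdd (show l - 1 + 1 = l by ring) (L.d (l - 1) (y1 + y2)) =
          (u - c2) + v := by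
        rw [map_add, map_add, ← hc1, ← hc2]
        have : z - c1 = u + v := huv.symm
        calc z - (c1 + c2) = (z - c1) - c2 := by abel
          _ = (u + v) - c2 := by rw [this]
          _ = (u - c2) + v := by abel
      rw [hsplit]
      exact add_mem ⟨hFdec a l hu2.1, hu2.2⟩ ⟨hv.1, hv.2⟩

variable (L : Cochain) (P F : ℤ → ∀ l, AddSubgroup (L.X l)) in
/-- Pushing a relative cocycle deeper into the `F`-filtration (when `a - b < l`). -/
theorem claimD
    (hPsub : ∀ p, L.IsSubcomplex (P p)) (hFsub : ∀ p, L.IsSubcomplex (F p))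
    (hPdec : ∀ p l, P (p + 1) l ≤ P p l)
    (hV : ∀ a b r : ℤ, r ≠ a - b → ∀ x : L.X r, x ∈ F a r → x ∈ P b r →
      L.d r x ∈ (F (a + 1) (r + 1) ⊓ P b (r + 1)) ⊔ (F a (r + 1) ⊓ P (b + 1) (r + 1)) →
      ∃ y, (y ∈ F a (r - 1) ∧ y ∈ P b (r - 1)) ∧
        x - L.castAdd (show r - 1 + 1 = r by ring) (L.d (r - 1) y) ∈
          (F (a + 1) r ⊓ P b r) ⊔ (F a r ⊓ P (b + 1) r))
    (b1 : ℤ) (hPbot : ∀ l, P b1 l = ⊥) :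
    ∀ (k : ℕ) (a b l : ℤ), b1 ≤ b + k → a - b < l →
      ∀ z : L.X l, z ∈ F a l → z ∈ P b l →
      L.d l z ∈ F (a + 1) (l + 1) → L.d l z ∈ P b (l + 1) →
      ∃ y, (y ∈ F a (l - 1) ∧ y ∈ P b (l - 1)) ∧
        z - L.castAdd (show l - 1 + 1 = l by ring) (L.d (l - 1) y) ∈ F (a + 1) l ⊓ P b l := by
  have base : ∀ (a b l : ℤ), b1 ≤ b → ∀ z : L.X l, z ∈ P b l →
      ∃ y, (y ∈ F a (l - 1) ∧ y ∈ P b (l - 1)) ∧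
        z - L.castAdd (show l - 1 + 1 = l by ring) (L.d (l - 1) y) ∈ F (a + 1) l ⊓ P b l := by
    intro a b l hb z hzP
    have hz0 : z = 0 := by
      have : z ∈ P b1 l := filt_mono hPdec hb l hzP
      simpa [hPbot l] using this
    refine ⟨0, ⟨zero_mem _, zero_mem _⟩, ?_⟩
    simp only [hz0, map_zero, sub_zero]
    exact ⟨zero_mem _, zero_mem _⟩
  intro k
  induction k with
  | zero =>
    intro a b l hk hl z hzF hzP hdF hdP
    exact base a b l (by simpa using hk) z hzP
  | succ n ih =>
    intro a b l hk hl z hzF hzP hdF hdP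
    by_cases hb : b1 ≤ b
    · exact base a b l hb z hzP
    · push_neg at hb
      obtain ⟨y1, ⟨hy1F, hy1P⟩, hz1⟩ := hV a b l (by omega) z hzF hzP
        (AddSubgroup.mem_sup_left ⟨hdF, hdP⟩)
      set c1 := L.castAdd (show l - 1 + 1 = l by ring) (L.d (l - 1) y1) with hc1
      obtain ⟨u, hu, v, hv, huv⟩ := AddSubgroup.mem_sup.1 hz1
      have hdc1 : L.d l c1 = 0 := d_castAdd_d l y1
      have hdv : L.d l v = L.d l z - L.d l u := by
        have : v = z - c1 - u := by rw [← huv]; abel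
        rw [this, map_sub, map_sub, hdc1]; abel
      have hdvF : L.d l v ∈ F (a + 1) (l + 1) := by
        rw [hdv]; exact sub_mem hdF (hFsub (a + 1) l u hu.1)
      have hdvP : L.d l v ∈ P (b + 1) (l + 1) := hPsub (b + 1) l v hv.2
      obtain ⟨y2, ⟨hy2F, hy2P⟩, hv2⟩ := ih a (b + 1) l (by push_cast at hk ⊢; omega)
        (by omega) v hv.1 hv.2 hdvF hdvP
      set c2 := L.castAdd (show l - 1 + 1 = l by ring) (L.d (l - 1) y2) with hc2
      refine ⟨y1 + y2, ⟨add_mem hy1F hy2F, add_mem hy1P (hPdec b (l - 1) hy2P)⟩, ?_⟩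
      have hsplit : z - L.castAdd (show l - 1 + 1 = l by ring) (L.d (l - 1) (y1 + y2)) =
          u + (v - c2) := by
        rw [map_add, map_add, ← hc1, ← hc2]
        have : z - c1 = u + v := huv.symm
        calc z - (c1 + c2) = (z - c1) - c2 := by abel
          _ = (u + v) - c2 := by rw [this]
          _ = u + (v - c2) := by abel
      rw [hsplit]
      exact add_mem ⟨hu.1, hu.2⟩ ⟨hv2.1, hPdec b l hv2.2⟩

end Cochain

open Cochain in
/-- (Key proposition on bifiltered complexes, cohomological form.)
If a bounded-below cochain complex `L` of abelian groups carries two finite decreasing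
filtrations `P` and `F` by subcomplexes with `H^r(Gr^a_F Gr^b_P L) = 0` for all `r ≠ a - b`,
then the induced filtrations on cohomology agree after the shift:
`P^p H^l(L) = F^{p+l} H^l(L)`. -/
theorem bifiltered_key_proposition (L : Cochain)
    (P F : ℤ → ∀ l, AddSubgroup (L.X l))
    (hbelow : ∃ n₀ : ℤ, ∀ l : ℤ, l < n₀ → ∀ x : L.X l, x = 0)
    (hPdec : ∀ p l, P (p + 1) l ≤ P p l) (hFdec : ∀ p l, F (p + 1) l ≤ F p l)
    (hPsub : ∀ p, L.IsSubcomplex (P p)) (hFsub : ∀ p, L.IsSubcomplex (F p))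
    (hPfin : ∃ a b : ℤ, (∀ l, P a l = ⊤) ∧ (∀ l, P b l = ⊥))
    (hFfin : ∃ a b : ℤ, (∀ l, F a l = ⊤) ∧ (∀ l, F b l = ⊥))
    (hvan : ∀ a b r : ℤ, r ≠ a - b →
      Subsingleton ((GrGrCochain L F P hFsub hPsub hFdec hPdec a b).H r)) :
    ∀ p l : ℤ, imageInH L (P p) (hPsub p) l = imageInH L (F (p + l)) (hFsub (p + l)) l := by
  obtain ⟨bT, b1, hPtop, hPbot⟩ := hPfin
  obtain ⟨aT, a1, hFtop, hFbot⟩ := hFfin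
  -- element-level form of the vanishing hypothesis
  have hV : ∀ a b r : ℤ, r ≠ a - b → ∀ x : L.X r, x ∈ F a r → x ∈ P b r →
      L.d r x ∈ (F (a + 1) (r + 1) ⊓ P b (r + 1)) ⊔ (F a (r + 1) ⊓ P (b + 1) (r + 1)) →
      ∃ y, (y ∈ F a (r - 1) ∧ y ∈ P b (r - 1)) ∧
        x - L.castAdd (show r - 1 + 1 = r by ring) (L.d (r - 1) y) ∈
          (F (a + 1) r ⊓ P b r) ⊔ (F a r ⊓ P (b + 1) r) := by
    intro a b r hr x hxF hxP hdx
    obtain ⟨y, hy, hh⟩ := gr_vanish_elim L (fun l => F a l ⊓ P b l)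
      (fun l => (F (a + 1) l ⊓ P b l) ⊔ (F a l ⊓ P (b + 1) l))
      (IsSubcomplex.inf (hFsub a) (hPsub b))
      (IsSubcomplex.sup (IsSubcomplex.inf (hFsub (a + 1)) (hPsub b))
        (IsSubcomplex.inf (hFsub a) (hPsub (b + 1))))
      (fun l => sup_le (inf_le_inf_right _ (hFdec a l)) (inf_le_inf_left _ (hPdec b l)))
      r (hvan a b r hr) x ⟨hxF, hxP⟩ hdx
    exact ⟨y, ⟨hy.1, hy.2⟩, hh⟩
  have hC := claimC L P F hPsub hFsub hFdec hV a1 hFbot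
  have hD := claimD L P F hPsub hFsub hPdec hV b1 hPbot
  intro p l
  -- iterating claim C : a cocycle in F^{p+l} is cohomologous to a cocycle in P^p
  have iter1 : ∀ (k : ℕ) (b : ℤ) (z : L.X l), p ≤ b + k → z ∈ F (p + l) l → z ∈ P b l →
      L.d l z = 0 → ∃ z' w, z' ∈ P p l ∧ L.d l z' = 0 ∧
        z - z' = L.castAdd (show l - 1 + 1 = l by ring) (L.d (l - 1) w) := by
    intro k
    induction k with
    | zero =>
      intro b z hk hzF hzP hdz
      refine ⟨z, 0, filt_mono hPdec (by simpa using hk) l hzP, hdz, ?_⟩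
      simp
    | succ n ih =>
      intro b z hk hzF hzP hdz
      by_cases hb : p ≤ b
      · exact ⟨z, 0, filt_mono hPdec hb l hzP, hdz, by simp⟩
      · push_neg at hb
        obtain ⟨y, hy, hz1⟩ := hC ((a1 - (p + l)).toNat) (p + l) b l (by omega) (by omega) z hzF hzP
          (by rw [hdz]; exact zero_mem _) (by rw [hdz]; exact zero_mem _)
        set c := L.castAdd (show l - 1 + 1 = l by ring) (L.d (l - 1) y) with hc
        have hdz1 : L.d l (z - c) = 0 := by
          rw [map_sub, hdz, d_castAdd_d]; simp
        obtain ⟨z', w, hz'P, hdz', heq⟩ := ih (b + 1) (z - c)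
          (by push_cast at hk ⊢; omega) hz1.1 hz1.2 hdz1
        refine ⟨z', y + w, hz'P, hdz', ?_⟩
        rw [map_add, map_add, ← hc]
        have : z - c - z' = L.castAdd (show l - 1 + 1 = l by ring) (L.d (l - 1) w) := heq
        calc z - z' = c + (z - c - z') := by abel
          _ = c + L.castAdd (show l - 1 + 1 = l by ring) (L.d (l - 1) w) := by rw [this]
  -- iterating claim D : a cocycle in P^p is cohomologous to a cocycle in F^{p+l}
  have iter2 : ∀ (k : ℕ) (a : ℤ) (z : L.X l), p + l ≤ a + k → z ∈ F a l → z ∈ P p l →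
      L.d l z = 0 → ∃ z' w, z' ∈ F (p + l) l ∧ L.d l z' = 0 ∧
        z - z' = L.castAdd (show l - 1 + 1 = l by ring) (L.d (l - 1) w) := by
    intro k
    induction k with
    | zero =>
      intro a z hk hzF hzP hdz
      refine ⟨z, 0, filt_mono hFdec (by simpa using hk) l hzF, hdz, ?_⟩
      simp
    | succ n ih =>
      intro a z hk hzF hzP hdz
      by_cases ha : p + l ≤ a
      · exact ⟨z, 0, filt_mono hFdec ha l hzF, hdz, by simp⟩
      · push_neg at ha
        obtain ⟨y, hy, hz1⟩ := hD ((b1 - p).toNat) a p l (by omega) (by omega) z hzF hzP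
          (by rw [hdz]; exact zero_mem _) (by rw [hdz]; exact zero_mem _)
        set c := L.castAdd (show l - 1 + 1 = l by ring) (L.d (l - 1) y) with hc
        have hdz1 : L.d l (z - c) = 0 := by
          rw [map_sub, hdz, d_castAdd_d]; simp
        obtain ⟨z', w, hz'F, hdz', heq⟩ := ih (a + 1) (z - c)
          (by push_cast at hk ⊢; omega) hz1.1 hz1.2 hdz1
        refine ⟨z', y + w, hz'F, hdz', ?_⟩
        rw [map_add, map_add, ← hc]
        have : z - c - z' = L.castAdd (show l - 1 + 1 = l by ring) (L.d (l - 1) w) := heq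
        calc z - z' = c + (z - c - z') := by abel
          _ = c + L.castAdd (show l - 1 + 1 = l by ring) (L.d (l - 1) w) := by rw [this]
  ext h
  constructor
  · intro hh
    obtain ⟨z, hz, hzP, rfl⟩ := imageInH_elim L (P p) (hPsub p) l h hh
    have hdz : L.d l z = 0 := hz
    have hzF : z ∈ F aT l := by rw [hFtop l]; trivial
    obtain ⟨z', w, hz'F, hdz', heq⟩ := iter2 ((p + l - aT).toNat) aT z (by omega) hzF hzP hdz
    have hz'c : z' ∈ L.cocycles l := hdz'
    rw [Hmk_eq_of_bdry L l z z' hz hz'c w heq]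
    exact mem_imageInH L (F (p + l)) (hFsub (p + l)) l z' hz'c hz'F
  · intro hh
    obtain ⟨z, hz, hzF, rfl⟩ := imageInH_elim L (F (p + l)) (hFsub (p + l)) l h hh
    have hdz : L.d l z = 0 := hz
    have hzP : z ∈ P bT l := by rw [hPtop l]; trivial
    obtain ⟨z', w, hz'P, hdz', heq⟩ := iter1 ((p - bT).toNat) bT z (by omega) hzF hzP hdz
    have hz'c : z' ∈ L.cocycles l := hdz'
    rw [Hmk_eq_of_bdry L l z z' hz hz'c w heq]
    exact mem_imageInH L (P p) (hPsub p) l z' hz'c hz'P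
end

section
/- Let (L, F) be a filtered cochain complex of abelian groups with finite decreasing filtration by subcomplexes. For each p, there is a natural map of cochain complexes from Gr^p_{Dec(F)} L to the complex whose degree-l term is E_1^{p+l, −p}(L, F) = H^{p+l}(Gr^{p+l}_F L) with differential the d_1-differential of the spectral sequence of (L, F), and this natural map is a quasi-isomorphism. -/
set_option linter.unusedVariables false


open Cochain in
/-- The canonical map sending an element `x ∈ F^s L^l` with `dx ∈ F^{s+1} L^{l+1}` to the
cohomology class of its image in `H^l(Gr^s_F L)`. -/
def grClassHom (L : Cochain) (F : ℤ → ∀ l, AddSubgroup (L.X l))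
    (hsub : ∀ p, L.IsSubcomplex (F p)) (hdec : ∀ p l, F (p + 1) l ≤ F p l) (s l : ℤ) :
    ↥(F s l ⊓ (F (s + 1) (l + 1)).comap (L.d l)) →+
      (GrCochain L (F s) (F (s + 1)) (hsub s) (hsub (s + 1)) (fun l' => hdec s l')).H l :=
  (Cochain.Hmk _ l).comp (AddMonoidHom.codRestrict
    ((QuotientAddGroup.mk' ((F (s + 1) l).addSubgroupOf (F s l))).comp
      (AddSubgroup.inclusion inf_le_left)) _ (fun x => by
        refine AddMonoidHom.mem_ker.2 ?_
        exact (QuotientAddGroup.eq_zero_iff (N := (F (s + 1) (l + 1)).addSubgroupOf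
          (F s (l + 1))) _).2 (AddSubgroup.mem_addSubgroupOf.2
          (AddSubgroup.mem_comap.1 (AddSubgroup.mem_inf.1 x.2).2))))

namespace Decal

open Cochain

section

variable (L : Cochain) (F : ℤ → ∀ l, AddSubgroup (L.X l))
  (hdec : ∀ p l, F (p + 1) l ≤ F p l) (hsub : ∀ p, L.IsSubcomplex (F p))

/-- transport lemmas for `castAdd`. -/
theorem castAdd_castAdd {a b c : ℤ} (e1 : a = b) (e2 : b = c) (x : L.X a) :
    L.castAdd e2 (L.castAdd e1 x) = L.castAdd (e1.trans e2) x := by subst e1; subst e2; rfl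

theorem castAdd_irrel {a b : ℤ} (e1 e2 : a = b) (x : L.X a) :
    L.castAdd e1 x = L.castAdd e2 x := rfl

theorem d_castAdd {a b : ℤ} (e : a = b) (x : L.X a) :
    L.d b (L.castAdd e x) = L.castAdd (by rw [e]) (L.d a x) := by subst e; rfl

theorem mem_castAdd {a b : ℤ} (e : a = b) (x : L.X a) (s : ℤ) :
    L.castAdd e x ∈ F s b ↔ x ∈ F s a := by subst e; exact Iff.rfl

/-- Abbreviations. -/
abbrev dom (s l : ℤ) : AddSubgroup (L.X l) := F s l ⊓ (F (s + 1) (l + 1)).comap (L.d l)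

abbrev Gr (s : ℤ) : Cochain :=
  GrCochain L (F s) (F (s + 1)) (hsub s) (hsub (s + 1)) (fun l' => hdec s l')

/-- Generic computation lemmas about `GrCochain`. -/
theorem GrCochain_d_mk {L : Cochain} (S T : ∀ l, AddSubgroup (L.X l)) (hS : L.IsSubcomplex S)
    (hT : L.IsSubcomplex T) (hle : ∀ l, T l ≤ S l) (l : ℤ) (x : ↥(S l)) :
    (GrCochain L S T hS hT hle).d l (QuotientAddGroup.mk x) =
      QuotientAddGroup.mk ⟨L.d l x.1, hS l x.1 x.2⟩ := rfl

theorem GrCochain_castAdd_mk {L : Cochain} (S T : ∀ l, AddSubgroup (L.X l))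
    (hS : L.IsSubcomplex S) (hT : L.IsSubcomplex T) (hle : ∀ l, T l ≤ S l)
    {a b : ℤ} (e : a = b) (x : ↥(S a)) :
    (GrCochain L S T hS hT hle).castAdd e (QuotientAddGroup.mk x) =
      QuotientAddGroup.mk ⟨L.castAdd e x.1, by subst e; exact x.2⟩ := by subst e; rfl

theorem GrCochain_mk_eq_mk {L : Cochain} (S T : ∀ l, AddSubgroup (L.X l))
    (hS : L.IsSubcomplex S) (hT : L.IsSubcomplex T) (hle : ∀ l, T l ≤ S l)
    (l : ℤ) (x y : ↥(S l)) :
    (QuotientAddGroup.mk x : (GrCochain L S T hS hT hle).X l) = QuotientAddGroup.mk y ↔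
      x.1 - y.1 ∈ T l := by
  exact (QuotientAddGroup.eq_iff_sub_mem (N := (T l).addSubgroupOf (S l)) (x := x) (y := y)).trans
    AddSubgroup.mem_addSubgroupOf

theorem GrCochain_mk_eq_zero {L : Cochain} (S T : ∀ l, AddSubgroup (L.X l))
    (hS : L.IsSubcomplex S) (hT : L.IsSubcomplex T) (hle : ∀ l, T l ≤ S l)
    (l : ℤ) (x : ↥(S l)) :
    (QuotientAddGroup.mk x : (GrCochain L S T hS hT hle).X l) = (0 : (GrCochain L S T hS hT hle).X l) ↔ x.1 ∈ T l := by
  exact (QuotientAddGroup.eq_zero_iff (N := (T l).addSubgroupOf (S l)) x).trans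
    AddSubgroup.mem_addSubgroupOf

/-- The value of `grClassHom`. -/
theorem g_val {s l : ℤ} (x : ↥(dom L F s l)) :
    ∃ h, grClassHom L F hsub hdec s l x = (Gr L F hdec hsub s).Hmk l
      ⟨QuotientAddGroup.mk ⟨x.1, (AddSubgroup.mem_inf.1 x.2).1⟩, h⟩ :=
  ⟨_, rfl⟩

/-- Class-zero criterion: if the representative is a boundary modulo `F^{s+1}`,
the class vanishes. -/
theorem g_zero_of_bdry {s l0 l : ℤ} (e : l0 + 1 = l) (x : ↥(dom L F s l)) (u : L.X l0)
    (hu : u ∈ F s l0) (h : x.1 - L.castAdd e (L.d l0 u) ∈ F (s + 1) l) :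
    grClassHom L F hsub hdec s l x = 0 := by
  obtain ⟨hc, hg⟩ := g_val L F hdec hsub x
  rw [hg]
  refine (QuotientAddGroup.eq_zero_iff _).2 (AddSubgroup.mem_addSubgroupOf.2 ?_)
  -- show the cocycle is a coboundary in `Gr s`
  have e' : l0 = l - 1 := by omega
  have ebd : l - 1 + 1 = l := by ring
  refine ⟨QuotientAddGroup.mk ⟨L.castAdd e' u, (mem_castAdd L F e' u s).2 hu⟩, ?_⟩
  simp only [AddMonoidHom.comp_apply, AddEquiv.coe_toAddMonoidHom]
  show (Gr L F hdec hsub s).castAdd ebd ((Gr L F hdec hsub s).d (l - 1)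
    (QuotientAddGroup.mk ⟨L.castAdd e' u, (mem_castAdd L F e' u s).2 hu⟩)) = _
  erw [GrCochain_d_mk (F s) (F (s + 1)) (hsub s) (hsub (s + 1)) (fun l' => hdec s l'),
    GrCochain_castAdd_mk (F s) (F (s + 1)) (hsub s) (hsub (s + 1)) (fun l' => hdec s l'),
    GrCochain_mk_eq_mk (F s) (F (s + 1)) (hsub s) (hsub (s + 1)) (fun l' => hdec s l')]
  show L.castAdd ebd (L.d (l - 1) (L.castAdd e' u)) - x.1 ∈ F (s + 1) l
  rw [d_castAdd, castAdd_castAdd, castAdd_irrel L _ e]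
  have := neg_mem h
  rw [neg_sub] at this
  exact this

theorem g_zero_of_mem {s l : ℤ} (x : ↥(dom L F s l)) (h : x.1 ∈ F (s + 1) l) :
    grClassHom L F hsub hdec s l x = 0 := by
  refine g_zero_of_bdry L F hdec hsub (show l - 1 + 1 = l by ring) x 0 (zero_mem _) ?_
  simpa using h

/-- Surjectivity of `grClassHom`. -/
theorem g_surj (s l : ℤ) : Function.Surjective (grClassHom L F hsub hdec s l) := by
  intro c
  obtain ⟨z, rfl⟩ := QuotientAddGroup.mk'_surjective _ c
  obtain ⟨z', hz'⟩ := z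
  obtain ⟨xb, rfl⟩ := QuotientAddGroup.mk_surjective z'
  have hz'' : (Gr L F hdec hsub s).d l (QuotientAddGroup.mk xb) = 0 :=
    AddMonoidHom.mem_ker.1 hz'
  erw [GrCochain_d_mk (F s) (F (s + 1)) (hsub s) (hsub (s + 1)) (fun l' => hdec s l'),
    GrCochain_mk_eq_zero (F s) (F (s + 1)) (hsub s) (hsub (s + 1)) (fun l' => hdec s l')]
    at hz''
  refine ⟨⟨xb.1, AddSubgroup.mem_inf.2 ⟨xb.2, AddSubgroup.mem_comap.2 hz''⟩⟩, ?_⟩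
  obtain ⟨hc, hg⟩ := g_val L F hdec hsub
    ⟨xb.1, AddSubgroup.mem_inf.2 ⟨xb.2, AddSubgroup.mem_comap.2 hz''⟩⟩
  rw [hg]
  exact congrArg _ (Subtype.ext (congrArg _ (Subtype.ext rfl)))

/-- Kernel of `grClassHom`. -/
theorem g_ker {s l : ℤ} (x : ↥(dom L F s l)) (h : grClassHom L F hsub hdec s l x = 0) :
    ∃ u : L.X (l - 1), u ∈ F s (l - 1) ∧
      x.1 - L.castAdd (show l - 1 + 1 = l by ring) (L.d (l - 1) u) ∈ F (s + 1) l := by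
  obtain ⟨hc, hg⟩ := g_val L F hdec hsub x
  rw [hg] at h
  have hb := AddSubgroup.mem_addSubgroupOf.1 ((QuotientAddGroup.eq_zero_iff _).1 h)
  obtain ⟨w, hw⟩ := hb
  obtain ⟨ub, rfl⟩ := QuotientAddGroup.mk_surjective w
  simp only [AddMonoidHom.comp_apply, AddEquiv.coe_toAddMonoidHom] at hw
  change (Gr L F hdec hsub s).castAdd _ ((Gr L F hdec hsub s).d (l - 1)
    (QuotientAddGroup.mk ub)) = _ at hw
  erw [GrCochain_d_mk (F s) (F (s + 1)) (hsub s) (hsub (s + 1)) (fun l' => hdec s l'),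
    GrCochain_castAdd_mk (F s) (F (s + 1)) (hsub s) (hsub (s + 1)) (fun l' => hdec s l'),
    GrCochain_mk_eq_mk (F s) (F (s + 1)) (hsub s) (hsub (s + 1)) (fun l' => hdec s l')]
    at hw
  refine ⟨ub.1, ub.2, ?_⟩
  have := neg_mem hw
  rw [neg_sub] at this
  exact this

/-- The differential `x ↦ dx` from `dom s l` to `dom (s+1) (l+1)`. -/
def Dmap (s l : ℤ) : ↥(dom L F s l) →+ ↥(dom L F (s + 1) (l + 1)) :=
  AddMonoidHom.codRestrict ((L.d l).domRestrict (dom L F s l)) _ (fun x =>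
    AddSubgroup.mem_inf.2 ⟨AddSubgroup.mem_comap.1 (AddSubgroup.mem_inf.1 x.2).2,
      AddSubgroup.mem_comap.2 (by
        show L.d (l + 1) (L.d l x.1) ∈ _
        rw [L.dd]; exact zero_mem _)⟩)

@[simp] theorem Dmap_val {s l : ℤ} (x : ↥(dom L F s l)) :
    (Dmap L F s l x).1 = L.d l x.1 := rfl

/-- Composite `[x] ↦ [dx]`. -/
def Dg (s l : ℤ) : ↥(dom L F s l) →+ (Gr L F hdec hsub (s + 1)).H (l + 1) :=
  (grClassHom L F hsub hdec (s + 1) (l + 1)).comp (Dmap L F s l)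

theorem Dg_ker {s l : ℤ} (x : ↥(dom L F s l))
    (h : grClassHom L F hsub hdec s l x = 0) : Dg L F hdec hsub s l x = 0 := by
  obtain ⟨u, hu, hx⟩ := g_ker L F hdec hsub x h
  refine g_zero_of_bdry L F hdec hsub rfl _
    (x.1 - L.castAdd (show l - 1 + 1 = l by ring) (L.d (l - 1) u)) hx ?_
  have hdu : L.d l (x.1 - L.castAdd (show l - 1 + 1 = l by ring) (L.d (l - 1) u))
      = L.d l x.1 := by
    rw [map_sub, d_castAdd, L.dd, map_zero, sub_zero]
  rw [castAdd_rfl, hdu]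
  show L.d l x.1 - L.d l x.1 ∈ _
  rw [sub_self]
  exact zero_mem _

/-- First isomorphism: `dom ⧸ ker g ≃+ H^l(Gr s)`. -/
noncomputable def Keq (s l : ℤ) :
    (↥(dom L F s l) ⧸ (grClassHom L F hsub hdec s l).ker) ≃+ (Gr L F hdec hsub s).H l :=
  AddEquiv.ofBijective
    (QuotientAddGroup.lift _ (grClassHom L F hsub hdec s l) (fun x hx => hx))
    ⟨by
      rw [injective_iff_map_eq_zero]
      intro a
      refine QuotientAddGroup.induction_on a (fun x hx => ?_)
      exact (QuotientAddGroup.eq_zero_iff _).2 hx,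
     fun c => by
      obtain ⟨x, hx⟩ := g_surj L F hdec hsub s l c
      exact ⟨QuotientAddGroup.mk x, hx⟩⟩

/-- The `d_1`-differential. -/
noncomputable def d1 (s l : ℤ) : (Gr L F hdec hsub s).H l →+ (Gr L F hdec hsub (s + 1)).H (l + 1) :=
  (QuotientAddGroup.lift _ (Dg L F hdec hsub s l)
      (fun x hx => Dg_ker L F hdec hsub x hx)).comp
    (Keq L F hdec hsub s l).symm.toAddMonoidHom

theorem d1_g {s l : ℤ} (x : ↥(dom L F s l)) :
    d1 L F hdec hsub s l (grClassHom L F hsub hdec s l x) =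
      grClassHom L F hsub hdec (s + 1) (l + 1) (Dmap L F s l x) := by
  have h1 : (Keq L F hdec hsub s l).symm (grClassHom L F hsub hdec s l x)
      = QuotientAddGroup.mk x :=
    (AddEquiv.symm_apply_eq _).2 rfl
  show QuotientAddGroup.lift _ (Dg L F hdec hsub s l)
      (fun x hx => Dg_ker L F hdec hsub x hx) ((Keq L F hdec hsub s l).symm _) = _
  rw [h1]
  rfl

/-- Cast of cohomology along an equality of filtration indices. -/
def castGr {s t : ℤ} (e : s = t) (l : ℤ) :
    (Gr L F hdec hsub s).H l ≃+ (Gr L F hdec hsub t).H l := by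
  subst e; exact AddEquiv.refl _

theorem castGr_g {s t l : ℤ} (e : s = t) (x : ↥(dom L F s l)) :
    castGr L F hdec hsub e l (grClassHom L F hsub hdec s l x)
      = grClassHom L F hsub hdec t l ⟨x.1, by subst e; exact x.2⟩ := by
  subst e; rfl

theorem g_of_val_zero {s l : ℤ} (x : ↥(dom L F s l)) (h : (x : L.X l) = 0) :
    grClassHom L F hsub hdec s l x = 0 := by
  rw [show x = 0 from Subtype.ext h, map_zero]

variable (p : ℤ)

/-- The `E_1` complex. -/
noncomputable def Ecx : Cochain where
  X l := (Gr L F hdec hsub (p + l)).H l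
  inst l := inferInstance
  d l := ((castGr L F hdec hsub (show p + l + 1 = p + (l + 1) by ring) (l + 1)
      ).toAddMonoidHom).comp (d1 L F hdec hsub (p + l) l)
  dd l x := by
    obtain ⟨y, rfl⟩ := g_surj L F hdec hsub (p + l) l x
    simp only [AddMonoidHom.comp_apply, AddEquiv.coe_toAddMonoidHom]
    rw [d1_g, castGr_g, d1_g]
    rw [g_of_val_zero L F hdec hsub _ (by exact L.dd l y.1)]
    rw [map_zero]

theorem Ecx_d_g (l : ℤ) (x : ↥(dom L F (p + l) l)) :
    (Ecx L F hdec hsub p).d l (grClassHom L F hsub hdec (p + l) l x)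
      = grClassHom L F hsub hdec (p + (l + 1)) (l + 1)
        ⟨L.d l x.1, by
          have e : p + l + 1 = p + (l + 1) := by ring
          rw [← e]
          exact (Dmap L F (p + l) l x).2⟩ := by
  show castGr L F hdec hsub _ (l + 1) (d1 L F hdec hsub (p + l) l _) = _
  rw [d1_g, castGr_g]
  rfl

theorem Ecx_castAdd_g {a b : ℤ} (e : a = b) (x : ↥(dom L F (p + a) a)) :
    (Ecx L F hdec hsub p).castAdd e (grClassHom L F hsub hdec (p + a) a x)
      = grClassHom L F hsub hdec (p + b) b
          ⟨L.castAdd e x.1, by subst e; exact x.2⟩ := by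
  subst e; rfl

theorem mem_dom_d (l : ℤ) (x : ↥(decF L F p l)) :
    L.d l x.1 ∈ dom L F (p + (l + 1)) (l + 1) := by
  have e : p + (l + 1) = p + l + 1 := by ring
  rw [e]
  exact (Dmap L F (p + l) l x).2

/-- The graded piece of the décalée filtration. -/
def GrDec : Cochain :=
  GrCochain L (fun l => decF L F p l) (fun l => decF L F (p + 1) l)
    (decF_isSubcomplex L F p) (decF_isSubcomplex L F (p + 1))
    (fun l => decF_mono L F hdec p l)

theorem GrDec_d_mk (l : ℤ) (x : ↥(decF L F p l)) :
    (GrDec L F hdec p).d l (QuotientAddGroup.mk x) =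
      QuotientAddGroup.mk ⟨L.d l x.1, decF_isSubcomplex L F p l x.1 x.2⟩ := rfl

theorem GrDec_castAdd_mk {a b : ℤ} (e : a = b) (x : ↥(decF L F p a)) :
    (GrDec L F hdec p).castAdd e (QuotientAddGroup.mk x) =
      QuotientAddGroup.mk ⟨L.castAdd e x.1, by subst e; exact x.2⟩ :=
  GrCochain_castAdd_mk (fun l => decF L F p l) (fun l => decF L F (p + 1) l)
    (decF_isSubcomplex L F p) (decF_isSubcomplex L F (p + 1))
    (fun l => decF_mono L F hdec p l) e x

include hdec in
theorem GrDec_mk_eq_mk (l : ℤ) (x y : ↥(decF L F p l)) :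
    (QuotientAddGroup.mk x : (GrDec L F hdec p).X l) = QuotientAddGroup.mk y ↔
      x.1 - y.1 ∈ decF L F (p + 1) l :=
  GrCochain_mk_eq_mk (fun l => decF L F p l) (fun l => decF L F (p + 1) l)
    (decF_isSubcomplex L F p) (decF_isSubcomplex L F (p + 1))
    (fun l => decF_mono L F hdec p l) l x y

include hdec in
theorem GrDec_mk_eq_zero (l : ℤ) (x : ↥(decF L F p l)) :
    (QuotientAddGroup.mk x : (GrDec L F hdec p).X l) = (0 : (GrDec L F hdec p).X l) ↔
      x.1 ∈ decF L F (p + 1) l :=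
  GrCochain_mk_eq_zero (fun l => decF L F p l) (fun l => decF L F (p + 1) l)
    (decF_isSubcomplex L F p) (decF_isSubcomplex L F (p + 1))
    (fun l => decF_mono L F hdec p l) l x

/-- The components of the natural map `Gr^p_{Dec F} L → E_1`. -/
noncomputable def fDecf (l : ℤ) : (GrDec L F hdec p).X l →+ (Ecx L F hdec hsub p).X l :=
  QuotientAddGroup.lift ((decF L F (p + 1) l).addSubgroupOf (decF L F p l))
    (show ↥(decF L F p l) →+ (Ecx L F hdec hsub p).X l from
      grClassHom L F hsub hdec (p + l) l)
    (fun x hx => by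
      refine g_zero_of_mem L F hdec hsub _ ?_
      have h1 : (x : L.X l) ∈ F (p + 1 + l) l :=
        (AddSubgroup.mem_inf.1 (AddSubgroup.mem_addSubgroupOf.1 hx)).1
      have e : p + 1 + l = p + l + 1 := by ring
      rw [e] at h1
      exact h1)

theorem fDecf_mk (l : ℤ) (x : ↥(decF L F p l)) :
    fDecf L F hdec hsub p l (QuotientAddGroup.mk x)
      = grClassHom L F hsub hdec (p + l) l x := rfl

/-- The natural map `Gr^p_{Dec F} L → E_1`. -/
noncomputable def fDec : Cochain.Hom (GrDec L F hdec p) (Ecx L F hdec hsub p) where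
  f := fDecf L F hdec hsub p
  comm l z := QuotientAddGroup.induction_on z (fun x => by
    show grClassHom L F hsub hdec (p + (l + 1)) (l + 1)
        ⟨L.d l x.1, mem_dom_d L F p l x⟩
      = (Ecx L F hdec hsub p).d l (grClassHom L F hsub hdec (p + l) l x)
    exact (Ecx_d_g L F hdec hsub p l x).symm)

theorem fDec_f_mk (l : ℤ) (x : ↥(decF L F p l)) :
    (fDec L F hdec hsub p).f l (QuotientAddGroup.mk x)
      = grClassHom L F hsub hdec (p + l) l x := rfl

/-- Computation of induced maps on cohomology. -/
theorem Hmap_mk {A B : Cochain} (φ : Cochain.Hom A B) (l : ℤ) (z : ↥(A.cocycles l)) :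
    φ.Hmap l (A.Hmk l z) = B.Hmk l (φ.cocyclesMap l z) := rfl

/-- Injectivity of the map induced by `fDec` on cohomology. -/
theorem fDec_inj (n : ℤ) : Function.Injective ((fDec L F hdec hsub p).Hmap n) := by
  rw [injective_iff_map_eq_zero]
  intro ξ
  obtain ⟨zc, rfl⟩ := QuotientAddGroup.mk'_surjective _ ξ
  obtain ⟨z, hz⟩ := zc
  obtain ⟨xb, rfl⟩ := QuotientAddGroup.mk_surjective
    (s := (decF L F (p + 1) n).addSubgroupOf (decF L F p n)) z
  intro hξ
  -- the cocycle condition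
  have hz0 : (GrDec L F hdec p).d n (QuotientAddGroup.mk xb) = 0 :=
    AddMonoidHom.mem_ker.1 hz
  rw [GrDec_d_mk] at hz0
  replace hz0 := (GrDec_mk_eq_zero L F hdec p (n + 1) _).1 hz0
  have hdx : L.d n xb.1 ∈ F (p + n + 2) (n + 1) := by
    have h := (AddSubgroup.mem_inf.1 hz0).1
    have e : p + 1 + (n + 1) = p + n + 2 := by ring
    rw [e] at h
    exact h
  -- the vanishing condition
  have hb : grClassHom L F hsub hdec (p + n) n xb ∈ (Ecx L F hdec hsub p).bdry n := by
    have h0 : (Ecx L F hdec hsub p).Hmk n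
        ⟨grClassHom L F hsub hdec (p + n) n xb, _⟩ = 0 := hξ
    exact AddSubgroup.mem_addSubgroupOf.1 ((QuotientAddGroup.eq_zero_iff _).1 h0)
  obtain ⟨y, hy⟩ := hb
  obtain ⟨w, rfl⟩ := g_surj L F hdec hsub (p + (n - 1)) (n - 1) y
  change (Ecx L F hdec hsub p).castAdd _ ((Ecx L F hdec hsub p).d (n - 1)
    (grClassHom L F hsub hdec (p + (n - 1)) (n - 1) w)) = _ at hy
  rw [Ecx_d_g, Ecx_castAdd_g] at hy
  -- extract a representative difference
  have ebd : n - 1 + 1 = n := by ring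
  have hdw : L.d (n - 1) w.1 ∈ F (p + (n - 1) + 1) (n - 1 + 1) :=
    AddSubgroup.mem_comap.1 (AddSubgroup.mem_inf.1 w.2).2
  have hcdw : L.castAdd ebd (L.d (n - 1) w.1) ∈ F (p + n) n := by
    have e : p + (n - 1) + 1 = p + n := by ring
    rw [← e]
    exact (mem_castAdd L F ebd _ _).2 hdw
  have hW2 : L.castAdd ebd (L.d (n - 1) w.1) ∈ dom L F (p + n) n := by
    refine AddSubgroup.mem_inf.2 ⟨hcdw, AddSubgroup.mem_comap.2 ?_⟩
    rw [d_castAdd, L.dd, map_zero]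
    exact zero_mem _
  have hy' : grClassHom L F hsub hdec (p + n) n ⟨L.castAdd ebd (L.d (n - 1) w.1), hW2⟩
      = grClassHom L F hsub hdec (p + n) n
          (⟨xb.1, xb.2⟩ : ↥(dom L F (p + n) n)) := hy
  have hker : grClassHom L F hsub hdec (p + n) n
      ((⟨xb.1, xb.2⟩ : ↥(dom L F (p + n) n)) -
        ⟨L.castAdd ebd (L.d (n - 1) w.1), hW2⟩) = 0 := by
    rw [map_sub, ← hy', sub_self]
  obtain ⟨u, hu, hval⟩ := g_ker L F hdec hsub _ hker
  have hvalF : (xb.1 - L.castAdd ebd (L.d (n - 1) w.1)) -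
      L.castAdd (show n - 1 + 1 = n by ring) (L.d (n - 1) u) ∈ F (p + n + 1) n :=
    hval
  have hcdu : L.castAdd ebd (L.d (n - 1) u) ∈ F (p + n) n := by
    have h1 : xb.1 - L.castAdd ebd (L.d (n - 1) w.1) ∈ F (p + n) n :=
      sub_mem (AddSubgroup.mem_inf.1 xb.2).1 hcdw
    have h2 := sub_mem h1 (hdec (p + n) n hvalF)
    rw [sub_sub_cancel] at h2
    exact h2
  have hdu : L.d (n - 1) u ∈ F (p + (n - 1) + 1) (n - 1 + 1) := by
    have e : p + (n - 1) + 1 = p + n := by ring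
    rw [e]
    exact (mem_castAdd L F ebd _ _).1 hcdu
  -- the boundary witness
  have hv1 : w.1 + u ∈ F (p + (n - 1)) (n - 1) := by
    refine add_mem (AddSubgroup.mem_inf.1 w.2).1 ?_
    refine hdec (p + (n - 1)) (n - 1) ?_
    have e : p + (n - 1) + 1 = p + n := by ring
    rw [e]
    exact hu
  have hv2 : L.d (n - 1) (w.1 + u) ∈ F (p + (n - 1) + 1) (n - 1 + 1) := by
    rw [map_add]
    exact add_mem hdw hdu
  set V : ↥(decF L F p (n - 1)) :=
    ⟨w.1 + u, AddSubgroup.mem_inf.2 ⟨hv1, AddSubgroup.mem_comap.2 hv2⟩⟩ with hV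
  -- the difference lies in `decF (p+1) n`
  have hdiff : L.castAdd ebd (L.d (n - 1) V.1) - xb.1 ∈ decF L F (p + 1) n := by
    have hval' : L.castAdd ebd (L.d (n - 1) V.1) - xb.1 =
        -((xb.1 - L.castAdd ebd (L.d (n - 1) w.1)) -
          L.castAdd (show n - 1 + 1 = n by ring) (L.d (n - 1) u)) := by
      rw [hV]
      show L.castAdd ebd (L.d (n - 1) (w.1 + u)) - xb.1 = _
      rw [map_add, map_add]
      rw [castAdd_irrel L (show n - 1 + 1 = n by ring) ebd (L.d (n - 1) u)]
      abel
    rw [hval']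
    refine neg_mem (AddSubgroup.mem_inf.2 ⟨?_, AddSubgroup.mem_comap.2 ?_⟩)
    · have e : p + n + 1 = p + 1 + n := by ring
      rw [← e]
      exact hvalF
    · -- the differential of the difference is `d xb`
      have hcomp : L.d n ((xb.1 - L.castAdd ebd (L.d (n - 1) w.1)) -
          L.castAdd (show n - 1 + 1 = n by ring) (L.d (n - 1) u)) = L.d n xb.1 := by
        rw [map_sub, map_sub, d_castAdd, d_castAdd, L.dd, L.dd, map_zero,
          sub_zero, sub_zero]
      rw [hcomp]
      have e : p + 1 + n + 1 = p + n + 2 := by ring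
      rw [e]
      exact hdx
  -- conclude
  refine (QuotientAddGroup.eq_zero_iff _).2 (AddSubgroup.mem_addSubgroupOf.2 ?_)
  refine ⟨QuotientAddGroup.mk V, ?_⟩
  simp only [AddMonoidHom.comp_apply, AddEquiv.coe_toAddMonoidHom]
  change (GrDec L F hdec p).castAdd _ ((GrDec L F hdec p).d (n - 1)
    (QuotientAddGroup.mk V)) = _
  rw [GrDec_d_mk, GrDec_castAdd_mk]
  exact (GrDec_mk_eq_mk L F hdec p n _ _).2 hdiff

/-- Surjectivity of the map induced by `fDec` on cohomology. -/
theorem fDec_surj (n : ℤ) : Function.Surjective ((fDec L F hdec hsub p).Hmap n) := by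
  intro c
  obtain ⟨zc, rfl⟩ := QuotientAddGroup.mk'_surjective _ c
  obtain ⟨z, hz⟩ := zc
  obtain ⟨xb, rfl⟩ := g_surj L F hdec hsub (p + n) n z
  have hz0 : (Ecx L F hdec hsub p).d n (grClassHom L F hsub hdec (p + n) n xb) = 0 :=
    AddMonoidHom.mem_ker.1 hz
  rw [Ecx_d_g] at hz0
  obtain ⟨u, hu, hval⟩ := g_ker L F hdec hsub _ hz0
  have e1 : n + 1 - 1 = n := by ring
  set u' : L.X n := L.castAdd e1 u with hu'def
  have hu' : u' ∈ F (p + n + 1) n := by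
    have e : p + (n + 1) = p + n + 1 := by ring
    rw [← e]
    exact (mem_castAdd L F e1 u _).2 hu
  have hdu' : L.d n u' = L.castAdd (show n + 1 - 1 + 1 = n + 1 by ring)
      (L.d (n + 1 - 1) u) := by
    rw [hu'def, d_castAdd]
  -- the corrected representative
  set x' : L.X n := xb.1 - u' with hx'def
  have hx1 : x' ∈ F (p + n) n :=
    sub_mem (AddSubgroup.mem_inf.1 xb.2).1 (hdec (p + n) n hu')
  have hdx' : L.d n x' ∈ F (p + n + 2) (n + 1) := by
    rw [hx'def, map_sub, hdu']
    have e : p + (n + 1) + 1 = p + n + 2 := by ring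
    rw [← e]
    exact hval
  have hdx'' : L.d n x' ∈ F (p + n + 1 + 1) (n + 1) := by
    have e : p + n + 1 + 1 = p + n + 2 := by ring
    rw [e]
    exact hdx'
  have hX1 : x' ∈ decF L F p n :=
    AddSubgroup.mem_inf.2 ⟨hx1, AddSubgroup.mem_comap.2 (hdec (p + n + 1) (n + 1) hdx'')⟩
  have hX2 : L.d n x' ∈ decF L F (p + 1) (n + 1) := by
    refine AddSubgroup.mem_inf.2 ⟨?_, AddSubgroup.mem_comap.2 ?_⟩
    · have e : p + 1 + (n + 1) = p + n + 2 := by ring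
      rw [e]
      exact hdx'
    · rw [L.dd]
      exact zero_mem _
  set X' : ↥(decF L F p n) := ⟨x', hX1⟩ with hX'
  have hcoc0 : (GrDec L F hdec p).d n (QuotientAddGroup.mk X') = 0 := by
    rw [GrDec_d_mk]
    exact (GrDec_mk_eq_zero (L := L) (F := F) (hdec := hdec) (p := p) (n + 1)
      ⟨L.d n X'.1, decF_isSubcomplex L F p n X'.1 X'.2⟩).2 hX2
  have hcoc : QuotientAddGroup.mk X' ∈ (GrDec L F hdec p).cocycles n :=
    AddMonoidHom.mem_ker.2 hcoc0
  refine ⟨(GrDec L F hdec p).Hmk n ⟨QuotientAddGroup.mk X', hcoc⟩, ?_⟩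
  rw [Hmap_mk]
  refine congrArg _ (Subtype.ext ?_)
  have hX1' : x' ∈ dom L F (p + n) n := hX1
  have h0 : grClassHom L F hsub hdec (p + n) n (xb - ⟨x', hX1'⟩) = 0 := by
    refine g_zero_of_mem L F hdec hsub _ ?_
    show xb.1 - x' ∈ F (p + n + 1) n
    rw [hx'def, sub_sub_cancel]
    exact hu'
  have h2 : grClassHom L F hsub hdec (p + n) n xb
      - grClassHom L F hsub hdec (p + n) n ⟨x', hX1'⟩ = 0 := by
    rw [← map_sub]
    exact h0
  exact (sub_eq_zero.1 h2).symm

end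

end Decal

open Cochain in
/-- (Deligne's décalage quasi-isomorphism.) For a filtered cochain complex
`(L, F)` of abelian groups there is a natural map of cochain complexes from
`Gr^p_{Dec(F)} L` to the complex `E` whose degree-`l` term is
`E_1^{p+l,-p}(L, F) = H^{l}(Gr^{p+l}_F L)` with differential the `d_1`-differential of the
spectral sequence of `(L, F)` — `d_1` is the connecting map of
`0 → Gr^{s+1}_F L → F^s L/F^{s+2} L → Gr^s_F L → 0`, characterized (via the surjections
`grClassHom`) by `d_1 [x] = [dx]` for `x ∈ F^s` with `dx ∈ F^{s+1}` — and this natural map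
is a quasi-isomorphism. -/
theorem decalage_quasi_isomorphism (L : Cochain)
    (F : ℤ → ∀ l, AddSubgroup (L.X l))
    (hdec : ∀ p l, F (p + 1) l ≤ F p l)
    (hsub : ∀ p, L.IsSubcomplex (F p))
    (hfin : ∃ a b : ℤ, (∀ l, F a l = ⊤) ∧ (∀ l, F b l = ⊥))
    (p : ℤ) :
    ∃ (E : Cochain)
      (iso : ∀ l : ℤ, E.X l ≃+ (GrCochain L (F (p + l)) (F (p + l + 1))
        (hsub (p + l)) (hsub (p + l + 1)) (fun l' => hdec (p + l) l')).H l)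
      (f : Cochain.Hom (GrCochain L (fun l => decF L F p l) (fun l => decF L F (p + 1) l)
        (decF_isSubcomplex L F p) (decF_isSubcomplex L F (p + 1))
        (fun l => decF_mono L F hdec p l)) E),
      -- the comparison maps from `{x ∈ F^s : dx ∈ F^{s+1}}` onto `H^l(Gr^s)` are surjective,
      (∀ s l : ℤ, Function.Surjective (grClassHom L F hsub hdec s l)) ∧
      -- the differential of `E` is the `d_1`-differential: `d_1 [x] = [dx]`,
      (∀ (l : ℤ) (x : ↥(decF L F p l)),
        iso (l + 1) (E.d l ((iso l).symm (grClassHom L F hsub hdec (p + l) l x)))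
          = grClassHom L F hsub hdec (p + (l + 1)) (l + 1)
            ⟨L.d l x.1, by
              have e : p + (l + 1) = p + l + 1 := by ring
              rw [e]
              exact AddSubgroup.mem_inf.2
                ⟨AddSubgroup.mem_comap.1 (AddSubgroup.mem_inf.1 x.2).2,
                 AddSubgroup.mem_comap.2 (by rw [L.dd]; exact zero_mem _)⟩⟩) ∧
      -- the natural map `Gr^p_{Dec(F)} L → E` is induced by the identity on representatives,
      (∀ (l : ℤ) (x : ↥(decF L F p l)),
        iso l (f.f l (QuotientAddGroup.mk'
          ((decF L F (p + 1) l).addSubgroupOf (decF L F p l)) x))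
          = grClassHom L F hsub hdec (p + l) l x) ∧
      -- and it is a quasi-isomorphism.
      (∀ n : ℤ, Function.Bijective (f.Hmap n)) := by
  classical
  refine ⟨Decal.Ecx L F hdec hsub p, fun l => AddEquiv.refl _,
    Decal.fDec L F hdec hsub p, fun s l => Decal.g_surj L F hdec hsub s l, ?_, ?_, ?_⟩
  · intro l x
    show (Decal.Ecx L F hdec hsub p).d l (grClassHom L F hsub hdec (p + l) l x) = _
    exact Decal.Ecx_d_g L F hdec hsub p l x
  · intro l x
    rfl
  · intro n
    exact ⟨Decal.fDec_inj L F hdec hsub p n, Decal.fDec_surj L F hdec hsub p n⟩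
end
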